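/- A point x_i ∈ χ lies on the boundary of conv(χ) if and only if its Voronoi region with respect to χ is unbounded. -/

import Mathlib

open scoped RealInnerProductSpace

abbrev Pt := EuclideanSpace ℝ (Fin 2)

/-- If there is a nonzero direction `v` making a non-acute angle with every `xj - xi`,
then the Voronoi cell of `xi` contains the ray `xi + t • v`, hence is unbounded. -/
lemma voronoi_unbounded_of_dir (χ : Finset Pt) (xi : Pt) (v : Pt) (hv : v ≠ 0)
    (h : ∀ xj ∈ χ, ⟪xj - xi, v⟫ ≤ 0) :
    ¬ Bornology.IsBounded {x : Pt | ∀ xj ∈ χ, xj ≠ xi → dist x xi ≤ dist x xj} := by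
  intro hb
  obtain ⟨C, hC⟩ := isBounded_iff_forall_norm_le.1 hb
  have hxiC : ‖xi‖ ≤ C := hC xi (by intro xj hj _; rw [dist_self]; exact dist_nonneg)
  have hvn : (0:ℝ) < ‖v‖ := norm_pos_iff.2 hv
  set t : ℝ := (C + ‖xi‖ + 1) / ‖v‖ with ht
  have hnum : (0:ℝ) < C + ‖xi‖ + 1 := by have := norm_nonneg xi; linarith
  have htpos : 0 < t := div_pos hnum hvn
  have hmem : xi + t • v ∈ {x : Pt | ∀ xj ∈ χ, xj ≠ xi → dist x xi ≤ dist x xj} := by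
    intro xj hj _
    have h1 : 0 ≤ ⟪xi - xj, t • v⟫ := by
      rw [inner_smul_right]
      have := h xj hj
      have h2 : ⟪xi - xj, v⟫ = -⟪xj - xi, v⟫ := by
        rw [← inner_neg_left]; congr 1; abel
      rw [h2]; nlinarith
    have key : ‖t • v‖ ^ 2 ≤ ‖xi + t • v - xj‖ ^ 2 := by
      have : xi + t • v - xj = (xi - xj) + t • v := by abel
      rw [this, norm_add_sq_real]
      nlinarith [sq_nonneg ‖xi - xj‖]
    have hle : ‖t • v‖ ≤ ‖xi + t • v - xj‖ := by
      have := Real.sqrt_le_sqrt key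
      rwa [Real.sqrt_sq (norm_nonneg _), Real.sqrt_sq (norm_nonneg _)] at this
    rw [dist_eq_norm, dist_eq_norm, add_sub_cancel_left]
    exact hle
  have hCx := hC _ hmem
  have htv : ‖t • v‖ = C + ‖xi‖ + 1 := by
    rw [norm_smul, Real.norm_eq_abs, abs_of_pos htpos, ht, div_mul_cancel₀ _ hvn.ne']
  have h3 : ‖t • v‖ ≤ ‖xi + t • v‖ + ‖xi‖ := by
    calc ‖t • v‖ = ‖(xi + t • v) - xi‖ := by rw [add_sub_cancel_left]
      _ ≤ ‖xi + t • v‖ + ‖xi‖ := norm_sub_le _ _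
  rw [htv] at h3
  linarith

/-- If `xi` is not in the interior of the convex hull, there is a nonzero separating
direction. -/
lemma exists_dir (χ : Finset Pt) (xi : Pt) (hxi : xi ∈ χ)
    (h : xi ∉ interior (convexHull ℝ (χ : Set Pt))) :
    ∃ v : Pt, v ≠ 0 ∧ ∀ xj ∈ χ, ⟪xj - xi, v⟫ ≤ 0 := by
  by_cases hne : (interior (convexHull ℝ (χ : Set Pt))).Nonempty
  · obtain ⟨f, hf⟩ := geometric_hahn_banach_open_point
      ((convex_convexHull ℝ (χ : Set Pt)).interior) isOpen_interior h
    obtain ⟨a, ha⟩ := hne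
    refine ⟨(InnerProductSpace.toDual ℝ Pt).symm f, ?_, ?_⟩
    · intro h0
      have hfa : f a = ⟪(InnerProductSpace.toDual ℝ Pt).symm f, a⟫ :=
        (InnerProductSpace.toDual_symm_apply).symm
      have hfxi : f xi = ⟪(InnerProductSpace.toDual ℝ Pt).symm f, xi⟫ :=
        (InnerProductSpace.toDual_symm_apply).symm
      have := hf a ha
      rw [hfa, hfxi, h0] at this
      simp at this
    · intro xj hj
      have hxj : xj ∈ convexHull ℝ (χ : Set Pt) := subset_convexHull ℝ _ hj
      have hle : f xj ≤ f xi := by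
        by_contra hlt
        push_neg at hlt
        set c : ℝ := f a - f xj with hc
        set δ : ℝ := f xj - f xi with hδdef
        have hδ : 0 < δ := sub_pos.2 hlt
        set t : ℝ := min 1 (δ / (2 * |c| + 1)) with htdef
        have ht0 : 0 < t := lt_min one_pos (by positivity)
        have ht1 : t ≤ 1 := min_le_left _ _
        have hmem := (convex_convexHull ℝ (χ : Set Pt)).add_smul_sub_mem_interior hxj ha
          ⟨ht0, ht1⟩
        have hlt2 := hf _ hmem
        have heval : f (xj + t • (a - xj)) = f xj + t * c := by
          rw [map_add, map_smul, map_sub]; simp [hc, smul_eq_mul]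
        rw [heval] at hlt2
        have h2 : t ≤ δ / (2 * |c| + 1) := min_le_right _ _
        have h3 : t * |c| ≤ δ / 2 := by
          have habs : (0:ℝ) ≤ |c| := abs_nonneg c
          calc t * |c| ≤ δ / (2 * |c| + 1) * |c| :=
                mul_le_mul_of_nonneg_right h2 habs
            _ ≤ δ / 2 := by
                rw [div_mul_eq_mul_div, div_le_div_iff₀ (by positivity) two_pos]
                nlinarith
        have h4 : -(δ / 2) ≤ t * c := by
          have := neg_abs_le c
          nlinarith
        have : f xi = f xj - δ := by rw [hδdef]; ring
        nlinarith
      have hrepr : ⟪xj - xi, (InnerProductSpace.toDual ℝ Pt).symm f⟫ = f xj - f xi := by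
        rw [real_inner_comm, InnerProductSpace.toDual_symm_apply, map_sub]
      rw [hrepr]
      linarith
  · rw [Set.not_nonempty_iff_eq_empty] at hne
    have hspan : affineSpan ℝ (χ : Set Pt) ≠ ⊤ := by
      intro htop
      have h1 : affineSpan ℝ (convexHull ℝ (χ : Set Pt)) = ⊤ := by
        rw [affineSpan_convexHull]; exact htop
      have h2 := (convex_convexHull ℝ (χ : Set Pt)).interior_nonempty_iff_affineSpan_eq_top.2 h1
      rw [hne] at h2
      exact Set.not_nonempty_empty h2
    have hxis : xi ∈ affineSpan ℝ (χ : Set Pt) := subset_affineSpan ℝ _ hxi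
    have hdir : (affineSpan ℝ (χ : Set Pt)).direction ≠ ⊤ := by
      intro htop
      exact hspan ((AffineSubspace.direction_eq_top_iff_of_nonempty ⟨xi, hxis⟩).1 htop)
    have horth : ((affineSpan ℝ (χ : Set Pt)).direction)ᗮ ≠ ⊥ := by
      intro hbot
      exact hdir (Submodule.orthogonal_eq_bot_iff.1 hbot)
    obtain ⟨v, hvmem, hv⟩ := Submodule.exists_mem_ne_zero_of_ne_bot horth
    refine ⟨v, hv, ?_⟩
    intro xj hj
    have hxjs : xj ∈ affineSpan ℝ (χ : Set Pt) := subset_affineSpan ℝ _ hj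
    have hsub : xj - xi ∈ (affineSpan ℝ (χ : Set Pt)).direction := by
      have := AffineSubspace.vsub_mem_direction hxjs hxis
      simpa using this
    have : ⟪xj - xi, v⟫ = 0 := (Submodule.mem_orthogonal _ v).1 hvmem _ hsub
    simp [this]

/-- If `xi` is interior to the convex hull, its Voronoi cell is bounded. -/
lemma bounded_of_interior (χ : Finset Pt) (xi : Pt) (hxi : xi ∈ χ)
    (h : xi ∈ interior (convexHull ℝ (χ : Set Pt))) :
    Bornology.IsBounded {x : Pt | ∀ xj ∈ χ, xj ≠ xi → dist x xi ≤ dist x xj} := by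
  obtain ⟨ε, hε, hball⟩ := Metric.isOpen_iff.1 isOpen_interior xi h
  set M : ℝ := χ.sup' ⟨xi, hxi⟩ (fun xj => ‖xj - xi‖ ^ 2) with hMdef
  have hM0 : (0:ℝ) ≤ M := by
    have h0 := Finset.le_sup' (fun xj => ‖xj - xi‖ ^ 2) hxi
    exact le_trans (by simp) h0
  have hMb : ∀ xj ∈ χ, ‖xj - xi‖ ^ 2 ≤ M := fun xj hj =>
    Finset.le_sup' (fun xj => ‖xj - xi‖ ^ 2) hj
  apply Bornology.IsBounded.subset (Metric.isBounded_closedBall (x := xi) (r := M / ε))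
  intro x hx
  simp only [Set.mem_setOf_eq] at hx
  rw [Metric.mem_closedBall]
  by_cases hxeq : x = xi
  · rw [hxeq]; simp; positivity
  · have hd : (0:ℝ) < ‖x - xi‖ := by
      rw [norm_pos_iff]; exact sub_ne_zero.2 hxeq
    set s : ℝ := ε / (2 * ‖x - xi‖) with hsdef
    have hs0 : 0 < s := by positivity
    set y : Pt := xi + s • (x - xi) with hydef
    have hy : y ∈ convexHull ℝ (χ : Set Pt) := by
      apply interior_subset
      apply hball
      rw [Metric.mem_ball, dist_eq_norm, hydef, add_sub_cancel_left, norm_smul,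
        Real.norm_eq_abs, abs_of_pos hs0, hsdef]
      have heq : ε / (2 * ‖x - xi‖) * ‖x - xi‖ = ε / 2 := by field_simp
      rw [heq]; linarith
    rw [Finset.convexHull_eq] at hy
    obtain ⟨w, hw0, hw1, hwy⟩ := hy
    rw [Finset.centerMass_eq_of_sum_1 _ _ hw1] at hwy
    have hysub : y - xi = ∑ xj ∈ χ, w xj • (xj - xi) := by
      have : ∑ xj ∈ χ, w xj • (xj - xi) = (∑ xj ∈ χ, w xj • xj) - (∑ xj ∈ χ, w xj) • xi := by
        rw [Finset.sum_smul]
        rw [← Finset.sum_sub_distrib]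
        congr 1
        ext xj
        rw [smul_sub]
      rw [this, hw1, one_smul]
      simp only [id] at hwy
      rw [hwy]
    have key1 : ⟪x - xi, y - xi⟫ = (ε / 2) * ‖x - xi‖ := by
      rw [hydef, add_sub_cancel_left, real_inner_smul_right, real_inner_self_eq_norm_sq,
        hsdef]
      field_simp
    have key2 : ⟪x - xi, y - xi⟫ ≤ M / 2 := by
      rw [hysub, inner_sum]
      have hterm : ∀ xj ∈ χ, ⟪x - xi, w xj • (xj - xi)⟫ ≤ w xj * (M / 2) := by
        intro xj hj
        rw [real_inner_smul_right]
        have hwj := hw0 xj hj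
        by_cases hji : xj = xi
        · rw [hji]
          simp only [sub_self, inner_zero_right, mul_zero]
          exact mul_nonneg (hji ▸ hwj) (by linarith)
        · have hcell := hx xj hj hji
          rw [dist_eq_norm, dist_eq_norm] at hcell
          have hsq : ‖x - xi‖ ^ 2 ≤ ‖x - xj‖ ^ 2 := by
            exact pow_le_pow_left₀ (norm_nonneg _) hcell 2
          have hexp : ‖x - xj‖ ^ 2 =
              ‖x - xi‖ ^ 2 - 2 * ⟪x - xi, xj - xi⟫ + ‖xj - xi‖ ^ 2 := by
            have hrw : x - xj = (x - xi) - (xj - xi) := by abel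
            rw [hrw, norm_sub_sq_real]
          have hMj := hMb xj hj
          have hinner : ⟪x - xi, xj - xi⟫ ≤ M / 2 := by nlinarith
          nlinarith
      calc ∑ xj ∈ χ, ⟪x - xi, w xj • (xj - xi)⟫
          ≤ ∑ xj ∈ χ, w xj * (M / 2) := Finset.sum_le_sum hterm
        _ = M / 2 := by rw [← Finset.sum_mul, hw1, one_mul]
    rw [dist_eq_norm]
    rw [key1] at key2
    rw [le_div_iff₀ hε]
    nlinarith

theorem boundary_iff_unbounded_voronoi (χ : Finset Pt) (xi : Pt) (hxi : xi ∈ χ)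
    (hcard : 2 ≤ χ.card) :
    xi ∉ interior (convexHull ℝ (χ : Set Pt)) ↔
      ¬ Bornology.IsBounded {x : Pt | ∀ xj ∈ χ, xj ≠ xi → dist x xi ≤ dist x xj} := by
  constructor
  · intro h
    obtain ⟨v, hv, hdir⟩ := exists_dir χ xi hxi h
    exact voronoi_unbounded_of_dir χ xi v hv hdir
  · intro hub hint
    exact hub (bounded_of_interior χ xi hxi hint)
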